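/- Let n > N ≥ 1 and r ≥ 1 be integers. Let S₍₁₎ be an (n−N)×n matrix, S₍₂₎ an (n−N)×N matrix, S₍₃₎ an N×n matrix, S₍₄₎ an N×N matrix, and for 0 ≤ j ≤ r−1 let L₍₁₎ʲ, L₍₂₎ʲ, L₍₃₎ʲ, L₍₄₎ʲ be matrices of the same respective dimensions. Assume the n×n matrix M obtained by stacking S₍₁₎ on top of S₍₃₎ is invertible. Let u ∈ ℝ^{n+N} and u⁰, …, u^{r−1} ∈ ℝ^{n+N} satisfy the block equation [S₍₁₎ S₍₂₎; S₍₃₎ S₍₄₎] u = Σ_{j=0}^{r−1} [L₍₁₎ʲ L₍₂₎ʲ; L₍₃₎ʲ L₍₄₎ʲ] uʲ, and let û ∈ ℝⁿ satisfy M û = Σ_{j=0}^{r−1} [L₍₁₎ʲ; L₍₃₎ʲ] uʲ(1:n), where uʲ(1:n) denotes the first n components of uʲ. If ε > 0 is such that the last N components of u and of each uʲ have ℓ∞ norm less than ε, then ‖u(1:n) − û‖ ≤ ‖M⁻¹‖ · (‖[S₍₂₎; S₍₄₎]‖ + Σ_{j=0}^{r−1} ‖[L₍₂₎ʲ; L₍₄₎ʲ]‖)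 · ε. -/

import Mathlib

open Matrix

/-- The `ℓ∞` norm of a vector. -/
noncomputable def vecNorm {ι : Type*} [Fintype ι] (v : ι → ℝ) : ℝ :=
  ⨆ i, |v i|

/-- The matrix norm induced by the `ℓ∞` vector norm: the maximum absolute row sum. -/
noncomputable def matNorm {ι κ : Type*} [Fintype ι] [Fintype κ] (A : Matrix ι κ ℝ) : ℝ :=
  ⨆ i, ∑ j, |A i j|


section Aux
variable {ι κ : Type*} [Fintype ι] [Fintype κ]

lemma vecNorm_nonneg (v : ι → ℝ) : 0 ≤ vecNorm v :=
  Real.iSup_nonneg fun i => abs_nonneg _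

lemma matNorm_nonneg (A : Matrix ι κ ℝ) : 0 ≤ matNorm A :=
  Real.iSup_nonneg fun i => Finset.sum_nonneg fun j _ => abs_nonneg _

lemma abs_le_vecNorm (v : ι → ℝ) (i : ι) : |v i| ≤ vecNorm v := by
  unfold vecNorm
  exact le_ciSup (f := fun i => |v i|) (Set.Finite.bddAbove (Set.finite_range _)) i

lemma rowSum_le_matNorm (A : Matrix ι κ ℝ) (i : ι) : ∑ j, |A i j| ≤ matNorm A := by
  unfold matNorm
  exact le_ciSup (f := fun i => ∑ j, |A i j|) (Set.Finite.bddAbove (Set.finite_range _)) i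

lemma vecNorm_le {v : ι → ℝ} {c : ℝ} (hc : 0 ≤ c) (h : ∀ i, |v i| ≤ c) :
    vecNorm v ≤ c := Real.iSup_le h hc

lemma vecNorm_mulVec_le (A : Matrix ι κ ℝ) (x : κ → ℝ) :
    vecNorm (A *ᵥ x) ≤ matNorm A * vecNorm x := by
  refine vecNorm_le (mul_nonneg (matNorm_nonneg A) (vecNorm_nonneg x)) fun i => ?_
  calc |(A *ᵥ x) i| = |∑ j, A i j * x j| := rfl
    _ ≤ ∑ j, |A i j * x j| := Finset.abs_sum_le_sum_abs _ _
    _ = ∑ j, |A i j| * |x j| := by simp [abs_mul]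
    _ ≤ ∑ j, |A i j| * vecNorm x := by
        refine Finset.sum_le_sum fun j _ => ?_
        exact mul_le_mul_of_nonneg_left (abs_le_vecNorm x j) (abs_nonneg _)
    _ = (∑ j, |A i j|) * vecNorm x := by rw [Finset.sum_mul]
    _ ≤ matNorm A * vecNorm x :=
        mul_le_mul_of_nonneg_right (rowSum_le_matNorm A i) (vecNorm_nonneg x)

lemma vecNorm_comp_equiv (f : ι ≃ κ) (v : κ → ℝ) : vecNorm (v ∘ f) = vecNorm v := by
  refine le_antisymm (vecNorm_le (vecNorm_nonneg v) fun i => abs_le_vecNorm v (f i))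
    (vecNorm_le (vecNorm_nonneg (v ∘ f)) fun i => ?_)
  simpa using abs_le_vecNorm (v ∘ f) (f.symm i)

end Aux

/-- Comparison of Approach 1 and (uncorrected) Approach 2. A vector `u ∈ ℝ^{n+N}` is
encoded by its first `n` components `u1` and its last `N` components `u2` (and similarly
each previous-step solution `uʲ` by `v1 j` and `v2 j`). The `n×n` stacked matrix `M`
(`S₍₁₎` on top of `S₍₃₎`) is viewed as a square matrix via the canonical identification
`e : Fin (n-N) ⊕ Fin N ≃ Fin n`. If `u` satisfies the Approach-1 block equation, `û`
satisfies the Approach-2 equation, `M` is invertible, and the trailing `N` components of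
`u` and of each `uʲ` are `< ε` in `ℓ∞` norm, then
`‖u(1:n) − û‖ ≤ ‖M⁻¹‖ (‖[S₂; S₄]‖ + Σⱼ ‖[L₂ʲ; L₄ʲ]‖) ε`. -/

theorem stmt17 (n N r : ℕ) (hN : 1 ≤ N) (hNn : N < n) (hr : 1 ≤ r)
    (S1 : Matrix (Fin (n - N)) (Fin n) ℝ) (S2 : Matrix (Fin (n - N)) (Fin N) ℝ)
    (S3 : Matrix (Fin N) (Fin n) ℝ) (S4 : Matrix (Fin N) (Fin N) ℝ)
    (L1 : ℕ → Matrix (Fin (n - N)) (Fin n) ℝ) (L2 : ℕ → Matrix (Fin (n - N)) (Fin N) ℝ)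
    (L3 : ℕ → Matrix (Fin N) (Fin n) ℝ) (L4 : ℕ → Matrix (Fin N) (Fin N) ℝ)
    (u1 : Fin n → ℝ) (u2 : Fin N → ℝ)
    (v1 : ℕ → Fin n → ℝ) (v2 : ℕ → Fin N → ℝ)
    (uhat : Fin n → ℝ) (ε : ℝ) (hε : 0 < ε)
    (e : (Fin (n - N) ⊕ Fin N) ≃ Fin n)
    (he : e = finSumFinEquiv.trans (finCongr (Nat.sub_add_cancel hNn.le)))
    (hMunit : IsUnit ((Matrix.fromRows S1 S3).submatrix e.symm id))
    (hblock : (Matrix.fromBlocks S1 S2 S3 S4) *ᵥ Sum.elim u1 u2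
        = ∑ j ∈ Finset.range r,
            (Matrix.fromBlocks (L1 j) (L2 j) (L3 j) (L4 j)) *ᵥ Sum.elim (v1 j) (v2 j))
    (hhat : (Matrix.fromRows S1 S3) *ᵥ uhat
        = ∑ j ∈ Finset.range r, (Matrix.fromRows (L1 j) (L3 j)) *ᵥ v1 j)
    (hu2 : vecNorm u2 < ε) (hv2 : ∀ j < r, vecNorm (v2 j) < ε) :
    vecNorm (u1 - uhat)
      ≤ matNorm (((Matrix.fromRows S1 S3).submatrix e.symm id)⁻¹)
        * (matNorm (Matrix.fromRows S2 S4)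
            + ∑ j ∈ Finset.range r, matNorm (Matrix.fromRows (L2 j) (L4 j))) * ε := by
  classical
  set M : Matrix (Fin n) (Fin n) ℝ := (Matrix.fromRows S1 S3).submatrix e.symm id with hM
  set w : (Fin (n - N) ⊕ Fin N) → ℝ :=
    (∑ j ∈ Finset.range r, Matrix.fromRows (L2 j) (L4 j) *ᵥ v2 j)
      - Matrix.fromRows S2 S4 *ᵥ u2 with hw
  -- Rewrite the block equation using fromRows
  have hS : Matrix.fromRows S1 S3 *ᵥ u1 + Matrix.fromRows S2 S4 *ᵥ u2
      = ∑ j ∈ Finset.range r,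
          (Matrix.fromRows (L1 j) (L3 j) *ᵥ v1 j + Matrix.fromRows (L2 j) (L4 j) *ᵥ v2 j) := by
    funext i
    have := congrFun hblock i
    simp only [Matrix.fromBlocks_mulVec, Matrix.fromRows_mulVec] at this ⊢
    cases i with
    | inl i =>
      simpa using this
    | inr i =>
      simpa using this
  have hdiff : Matrix.fromRows S1 S3 *ᵥ (u1 - uhat) = w := by
    rw [Matrix.mulVec_sub, hhat, hw]
    have : Matrix.fromRows S1 S3 *ᵥ u1
        = (∑ j ∈ Finset.range r,
            (Matrix.fromRows (L1 j) (L3 j) *ᵥ v1 j + Matrix.fromRows (L2 j) (L4 j) *ᵥ v2 j))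
          - Matrix.fromRows S2 S4 *ᵥ u2 := by
      rw [← hS]; abel
    rw [this, Finset.sum_add_distrib]
    abel
  have hMw : M *ᵥ (u1 - uhat) = w ∘ e.symm := by
    funext i
    simp only [hM, Matrix.mulVec, dotProduct, Matrix.submatrix_apply, id_eq,
      Function.comp_apply]
    exact congrFun hdiff (e.symm i)
  have hinvM : u1 - uhat = M⁻¹ *ᵥ (w ∘ e.symm) := by
    rw [← hMw, Matrix.mulVec_mulVec,
      Matrix.nonsing_inv_mul M ((Matrix.isUnit_iff_isUnit_det M).mp hMunit),
      Matrix.one_mulVec]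
  -- Bound the norm of w
  have hwbound : vecNorm w
      ≤ (matNorm (Matrix.fromRows S2 S4)
          + ∑ j ∈ Finset.range r, matNorm (Matrix.fromRows (L2 j) (L4 j))) * ε := by
    have hsum : vecNorm w ≤ matNorm (Matrix.fromRows S2 S4) * ε
        + ∑ j ∈ Finset.range r, matNorm (Matrix.fromRows (L2 j) (L4 j)) * ε := by
      refine vecNorm_le ?_ fun i => ?_
      · refine add_nonneg (mul_nonneg (matNorm_nonneg _) hε.le)
          (Finset.sum_nonneg fun j _ => mul_nonneg (matNorm_nonneg _) hε.le)
      · have h1 : |(Matrix.fromRows S2 S4 *ᵥ u2) i| ≤ matNorm (Matrix.fromRows S2 S4) * ε := by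
          refine le_trans (abs_le_vecNorm _ i) (le_trans (vecNorm_mulVec_le _ _) ?_)
          exact mul_le_mul_of_nonneg_left hu2.le (matNorm_nonneg _)
        have h2 : |(∑ j ∈ Finset.range r, Matrix.fromRows (L2 j) (L4 j) *ᵥ v2 j) i|
            ≤ ∑ j ∈ Finset.range r, matNorm (Matrix.fromRows (L2 j) (L4 j)) * ε := by
          rw [Finset.sum_apply]
          refine le_trans (Finset.abs_sum_le_sum_abs _ _) (Finset.sum_le_sum fun j hj => ?_)
          refine le_trans (abs_le_vecNorm _ i) (le_trans (vecNorm_mulVec_le _ _) ?_)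
          exact mul_le_mul_of_nonneg_left (hv2 j (Finset.mem_range.mp hj)).le (matNorm_nonneg _)
        calc |w i| ≤ |(∑ j ∈ Finset.range r, Matrix.fromRows (L2 j) (L4 j) *ᵥ v2 j) i|
              + |(Matrix.fromRows S2 S4 *ᵥ u2) i| := by
              rw [hw]; exact abs_sub _ _
          _ ≤ ∑ j ∈ Finset.range r, matNorm (Matrix.fromRows (L2 j) (L4 j)) * ε
              + matNorm (Matrix.fromRows S2 S4) * ε := add_le_add h2 h1
          _ = matNorm (Matrix.fromRows S2 S4) * ε
              + ∑ j ∈ Finset.range r, matNorm (Matrix.fromRows (L2 j) (L4 j)) * ε := by ring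
    calc vecNorm w ≤ _ := hsum
      _ = (matNorm (Matrix.fromRows S2 S4)
          + ∑ j ∈ Finset.range r, matNorm (Matrix.fromRows (L2 j) (L4 j))) * ε := by
        rw [add_mul, Finset.sum_mul]
  calc vecNorm (u1 - uhat) = vecNorm (M⁻¹ *ᵥ (w ∘ e.symm)) := by rw [hinvM]
    _ ≤ matNorm M⁻¹ * vecNorm (w ∘ e.symm) := vecNorm_mulVec_le _ _
    _ = matNorm M⁻¹ * vecNorm w := by rw [vecNorm_comp_equiv e.symm w]
    _ ≤ matNorm M⁻¹ * ((matNorm (Matrix.fromRows S2 S4)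
          + ∑ j ∈ Finset.range r, matNorm (Matrix.fromRows (L2 j) (L4 j))) * ε) :=
        mul_le_mul_of_nonneg_left hwbound (matNorm_nonneg _)
    _ = matNorm M⁻¹ * (matNorm (Matrix.fromRows S2 S4)
          + ∑ j ∈ Finset.range r, matNorm (Matrix.fromRows (L2 j) (L4 j))) * ε := by ring
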